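/- In the partial semigroup (P_f(ℕ),⊎), any two č-ip* sets have nonempty intersection. -/

import Mathlib

/-- A subset `𝒜` of `P_f(ℕ)` (the nonempty finite subsets of `ℕ`) is a č-ip set if there
is a sequence `⟨H_n⟩` of nonempty finite subsets of `ℕ` with `max H_n < min H_{n+1}` for
all `n` such that all finite unions `⋃_{n ∈ G} H_n` (for `G` finite nonempty) lie in `𝒜`. -/
def IsCIP (𝒜 : Set (Finset ℕ)) : Prop :=
  ∃ H : ℕ → Finset ℕ, (∀ n, (H n).Nonempty) ∧
    (∀ n, ∀ a ∈ H n, ∀ b ∈ H (n + 1), a < b) ∧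
    ∀ G : Finset ℕ, G.Nonempty → G.biUnion H ∈ 𝒜

/-- A subset of `P_f(ℕ)` is č-ip* if it meets every č-ip set. -/
def IsCIPStar (𝒜 : Set (Finset ℕ)) : Prop :=
  ∀ ℬ : Set (Finset ℕ), IsCIP ℬ → (𝒜 ∩ ℬ).Nonempty

open Filter Hindman

attribute [local instance] Ultrafilter.add Ultrafilter.addSemigroup

namespace CIPAux

/-- The stream of powers of two. -/
def pow2 : Stream' ℕ := fun n => 2 ^ n

/-- Finite sums of distinct powers of two with exponents `≥ b`. -/
def Dset (b : ℕ) : Set ℕ := FS (pow2.drop b)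

theorem Dset_mem {b m : ℕ} (hm : m ∈ Dset b) : 2 ^ b ∣ m ∧ 0 < m := by
  have key : ∀ (s : Stream' ℕ), ∀ m ∈ FS s,
      (∀ k, 2 ^ b ∣ s.get k ∧ 0 < s.get k) → 2 ^ b ∣ m ∧ 0 < m := by
    intro s m hm
    induction hm with
    | head' a => intro h; exact h 0
    | tail' a m h ih => intro hs; exact ih fun k => hs (k + 1)
    | cons' a m h ih =>
        intro hs
        obtain ⟨d1, p1⟩ := hs 0
        obtain ⟨d2, p2⟩ := ih fun k => hs (k + 1)
        exact ⟨Dvd.dvd.add d1 d2, Nat.add_pos_left p1 _⟩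
  refine key _ m hm fun k => ?_
  have : (pow2.drop b).get k = 2 ^ (k + b) := rfl
  rw [this]
  exact ⟨pow_dvd_pow 2 (Nat.le_add_left b k), Nat.pow_pos (by norm_num)⟩

/-- There is an idempotent ultrafilter on `ℕ` containing every `Dset b`. -/
theorem exists_idem : ∃ U : Ultrafilter ℕ, U + U = U ∧ ∀ n, Dset n ∈ U := by
  let S : Set (Ultrafilter ℕ) := ⋂ n, { U | ∀ᶠ m in U, m ∈ FS (pow2.drop n) }
  have h := exists_idempotent_in_compact_add_subsemigroup ?_ S ?_ ?_ ?_
  · rcases h with ⟨U, hU, U_idem⟩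
    exact ⟨U, U_idem, fun n => Set.mem_iInter.mp hU n⟩
  · exact Ultrafilter.continuous_add_left
  · apply IsCompact.nonempty_iInter_of_sequence_nonempty_isCompact_isClosed
    · intro n U hU
      filter_upwards [hU]
      rw [← Stream'.drop_drop, ← Stream'.tail_eq_drop]
      exact FS.tail _
    · intro n
      exact ⟨pure _, mem_pure.mpr <| FS.head _⟩
    · exact (ultrafilter_isClosed_basic _).isCompact
    · intro n
      apply ultrafilter_isClosed_basic
  · exact IsClosed.isCompact (isClosed_iInter fun i => ultrafilter_isClosed_basic _)
  · intro U hU V hV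
    rw [Set.mem_iInter] at *
    intro n
    rw [Set.mem_setOf_eq, Ultrafilter.eventually_add]
    filter_upwards [hU n] with m hm
    obtain ⟨n', hn⟩ := FS.add hm
    filter_upwards [hV (n + n')] with m' hm'
    apply hn
    simpa only [Stream'.drop_drop] using hm'

/-- The binary support of a natural number, as a `Finset`. -/
def Φ (m : ℕ) : Finset ℕ := (Finset.range (m + 1)).filter (m.testBit ·)

theorem mem_Φ {m i : ℕ} : i ∈ Φ m ↔ m.testBit i = true := by
  constructor
  · intro h; exact (Finset.mem_filter.mp h).2
  · intro h
    refine Finset.mem_filter.mpr ⟨Finset.mem_range.mpr ?_, h⟩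
    have h2 : 2 ^ i ≤ m := Nat.ge_two_pow_of_testBit h
    have : i < 2 ^ i := Nat.lt_two_pow_self
    omega

theorem Φ_nonempty {m : ℕ} (hm : 0 < m) : (Φ m).Nonempty := by
  obtain ⟨i, hi, -⟩ := Nat.exists_most_significant_bit (Nat.pos_iff_ne_zero.mp hm)
  exact ⟨i, mem_Φ.mpr hi⟩

theorem Φ_add {x y b : ℕ} (hx : x < 2 ^ b) (hy : 2 ^ b ∣ y) :
    Φ (x + y) = Φ x ∪ Φ y := by
  obtain ⟨z, rfl⟩ := hy
  ext j
  simp only [Finset.mem_union, mem_Φ]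
  rw [add_comm x (2 ^ b * z), Nat.testBit_two_pow_mul_add z hx j, Nat.testBit_two_pow_mul]
  by_cases hj : j < b
  · simp [hj, Nat.not_le_of_lt hj]
  · have : x.testBit j = false := Nat.testBit_lt_two_pow
      (lt_of_lt_of_le hx (Nat.pow_le_pow_right (by norm_num) (Nat.le_of_not_lt hj)))
    simp [hj, Nat.le_of_not_lt hj, this]

theorem Φ_lt_of_dvd {x y b : ℕ} (hx : x < 2 ^ b) (hy : 2 ^ b ∣ y)
    {i j : ℕ} (hi : i ∈ Φ x) (hj : j ∈ Φ y) : i < j := by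
  rw [mem_Φ] at hi hj
  by_contra hij
  push_neg at hij
  have h2 : 2 ^ i ≤ x := Nat.ge_two_pow_of_testBit hi
  have hib : i < b := by
    by_contra h
    push_neg at h
    exact absurd (lt_of_lt_of_le hx (Nat.pow_le_pow_right (by norm_num) h)) (Nat.not_lt.mpr h2)
  have hjb : j < b := lt_of_le_of_lt hij hib
  obtain ⟨z, rfl⟩ := hy
  rw [Nat.testBit_two_pow_mul] at hj
  simp [Nat.not_le_of_lt hjb] at hj

/-- The Galvin–Glazer construction: from an idempotent ultrafilter containing every `Dset b`
and a member `c` of the ultrafilter, produce a block sequence all of whose finite unions are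
binary supports of elements of `c`. -/
theorem exists_block (U : Ultrafilter ℕ) (idem : U + U = U) (hD : ∀ n, Dset n ∈ U)
    (c : Set ℕ) (hc : c ∈ U) :
    ∃ H : ℕ → Finset ℕ, (∀ n, (H n).Nonempty) ∧
      (∀ n, ∀ x ∈ H n, ∀ y ∈ H (n + 1), x < y) ∧
      ∀ G : Finset ℕ, G.Nonempty → ∃ m ∈ c, G.biUnion H = Φ m := by
  classical
  have star_mem : ∀ {s : Set ℕ}, s ∈ U → {m | ∀ᶠ m' in U, m + m' ∈ s} ∈ U := by
    intro s hs
    have h2 : ∀ᶠ m in ↑(U + U), m ∈ s := by rw [idem]; exact hs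
    rw [Ultrafilter.eventually_add] at h2
    exact h2
  have hne : ∀ p : {s : Set ℕ // s ∈ U},
      (p.1 ∩ {m | ∀ᶠ m' in U, m + m' ∈ p.1}).Nonempty :=
    fun p => Ultrafilter.nonempty_of_mem (inter_mem p.2 (star_mem p.2))
  let elem : {s : Set ℕ // s ∈ U} → ℕ := fun p => (hne p).some
  have elem_mem : ∀ p, elem p ∈ p.1 ∩ {m | ∀ᶠ m' in U, m + m' ∈ p.1} :=
    fun p => (hne p).some_mem
  let succ : {s : Set ℕ // s ∈ U} → {s : Set ℕ // s ∈ U} := fun p =>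
    ⟨p.1 ∩ ({m | elem p + m ∈ p.1} ∩ Dset (elem p + 1)),
      inter_mem p.2 (inter_mem ((elem_mem p).2) (hD _))⟩
  let st : ℕ → {s : Set ℕ // s ∈ U} := fun n => succ^[n] ⟨c ∩ Dset 0, inter_mem hc (hD 0)⟩
  let a : ℕ → ℕ := fun n => elem (st n)
  have st_succ : ∀ n, st (n + 1) = succ (st n) := fun n => Function.iterate_succ_apply' _ _ _
  have hsub : ∀ n, (st (n + 1)).1 ⊆ (st n).1 := by
    intro n; rw [st_succ]; exact Set.inter_subset_left
  have hmono : ∀ n m, n ≤ m → (st m).1 ⊆ (st n).1 := by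
    intro n m h
    induction h with
    | refl => exact subset_rfl
    | step h ih => exact fun x hx => ih (hsub _ hx)
  have hshift : ∀ n, ∀ m ∈ (st (n + 1)).1, a n + m ∈ (st n).1 := by
    intro n m hm; rw [st_succ] at hm; exact hm.2.1
  have hDsub : ∀ n, (st (n + 1)).1 ⊆ Dset (a n + 1) := by
    intro n; rw [st_succ]; exact fun x hx => hx.2.2
  have hbase : ∀ n, (st n).1 ⊆ c ∩ Dset 0 := fun n => hmono 0 n (Nat.zero_le n)
  have ha : ∀ n, a n ∈ (st n).1 := fun n => (elem_mem (st n)).1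
  have hapos : ∀ n, 0 < a n := fun n => (Dset_mem (hbase n (ha n)).2).2
  have haD : ∀ n, 2 ^ (a n + 1) ∣ a (n + 1) := fun n => (Dset_mem (hDsub n (ha (n + 1)))).1
  have halt : ∀ n, a n < 2 ^ (a n + 1) := fun n =>
    lt_of_lt_of_le (Nat.lt_two_pow_self) (Nat.pow_le_pow_right (by norm_num) (Nat.le_succ _))
  have key : ∀ G : Finset ℕ, ∀ hG : G.Nonempty,
      (∑ i ∈ G, a i) ∈ (st (G.min' hG)).1 ∧
        Φ (∑ i ∈ G, a i) = G.biUnion fun i => Φ (a i) := by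
    intro G
    induction G using Finset.strongInduction with
    | _ G ih =>
      intro hG
      set j := G.min' hG with hj
      rcases (G.erase j).eq_empty_or_nonempty with he | he
      · have hGj : G = {j} := by
          apply Finset.eq_singleton_iff_unique_mem.mpr
          refine ⟨G.min'_mem hG, fun x hx => ?_⟩
          by_contra hx'
          exact Finset.ne_empty_of_mem (Finset.mem_erase.mpr ⟨hx', hx⟩) he
        have h1 : ∑ i ∈ G, a i = a j := by rw [hGj]; simp
        have h2 : (G.biUnion fun i => Φ (a i)) = Φ (a j) := by
          rw [hGj]; exact Finset.singleton_biUnion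
        rw [h1, h2]
        exact ⟨ha j, rfl⟩
      · obtain ⟨ih1, ih2⟩ := ih (G.erase j) (Finset.erase_ssubset (G.min'_mem hG)) he
        have hjj' : j + 1 ≤ (G.erase j).min' he :=
          Nat.succ_le_of_lt (Finset.min'_lt_of_mem_erase_min' G hG ((G.erase j).min'_mem he))
        have hmem' : (∑ i ∈ G.erase j, a i) ∈ (st (j + 1)).1 := hmono _ _ hjj' ih1
        have hdvd : 2 ^ (a j + 1) ∣ ∑ i ∈ G.erase j, a i := (Dset_mem (hDsub j hmem')).1
        have hsum : a j + ∑ i ∈ G.erase j, a i = ∑ i ∈ G, a i :=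
          Finset.add_sum_erase _ _ (G.min'_mem hG)
        constructor
        · rw [← hsum]; exact hshift j _ hmem'
        · rw [← hsum, Φ_add (halt j) hdvd, ih2]
          conv_rhs => rw [← Finset.insert_erase (G.min'_mem hG), Finset.biUnion_insert]
  refine ⟨fun n => Φ (a n), fun n => Φ_nonempty (hapos n), ?_, ?_⟩
  · intro n x hx y hy
    exact Φ_lt_of_dvd (halt n) (haD n) hx hy
  · intro G hG
    obtain ⟨h1, h2⟩ := key G hG
    exact ⟨∑ i ∈ G, a i, (hbase _ h1).1, h2.symm⟩

/-- If `𝒜` is č-ip*, then the set of naturals whose binary support lies in `𝒜` belongs to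
our idempotent ultrafilter. -/
theorem Φ_mem_of_cipStar (U : Ultrafilter ℕ) (idem : U + U = U) (hD : ∀ n, Dset n ∈ U)
    {𝒜 : Set (Finset ℕ)} (h : IsCIPStar 𝒜) : {m : ℕ | Φ m ∈ 𝒜} ∈ U := by
  by_contra hnot
  have hc : {m : ℕ | Φ m ∈ 𝒜}ᶜ ∈ U := Ultrafilter.compl_mem_iff_notMem.mpr hnot
  obtain ⟨H, hHne, hblock, hmem⟩ := exists_block U idem hD _ hc
  obtain ⟨A, hA, G, hG, rfl⟩ := h {A | ∃ G : Finset ℕ, G.Nonempty ∧ A = G.biUnion H}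
    ⟨H, hHne, hblock, fun G hG => ⟨G, hG, rfl⟩⟩
  obtain ⟨m, hm, hm2⟩ := hmem G hG
  rw [hm2] at hA
  exact hm hA

end CIPAux

/-- In `(P_f(ℕ), ⊎)`, any two č-ip* sets have nonempty intersection. -/
theorem cipStar_inter (𝒜 ℬ : Set (Finset ℕ))
    (h𝒜' : ∀ H ∈ 𝒜, H.Nonempty) (hℬ' : ∀ H ∈ ℬ, H.Nonempty)
    (h𝒜 : IsCIPStar 𝒜) (hℬ : IsCIPStar ℬ) : (𝒜 ∩ ℬ).Nonempty := by
  obtain ⟨U, idem, hD⟩ := CIPAux.exists_idem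
  have h1 := CIPAux.Φ_mem_of_cipStar U idem hD h𝒜
  have h2 := CIPAux.Φ_mem_of_cipStar U idem hD hℬ
  obtain ⟨m, hm1, hm2⟩ := Ultrafilter.nonempty_of_mem (inter_mem h1 h2)
  exact ⟨CIPAux.Φ m, hm1, hm2⟩
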